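/- Let A₁,…,A_N ∈ GL₂(ℝ) and suppose there exist constants C > 0 and 0 < τ < 1 such that |det(A_{i₁}⋯A_{i_n})| / ‖A_{i₁}⋯A_{i_n}‖² ≤ C τⁿ for every finite word (i₁,…,i_n) ∈ {1,…,N}ⁿ and every n ∈ ℕ. Then for every σ-invariant ergodic probability measure ν on {1,…,N}^ℕ, the Lyapunov exponents satisfy χ₁(ν) < χ₂(ν), i.e. the Lyapunov spectrum is simple. -/

import Mathlib

open MeasureTheory Filter

/-- The Euclidean operator norm of a 2×2 real matrix. -/
noncomputable def mnorm (M : Matrix (Fin 2) (Fin 2) ℝ) : ℝ :=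
  ‖Matrix.toEuclideanCLM (𝕜 := ℝ) M‖

lemma mnorm_pos {M : Matrix (Fin 2) (Fin 2) ℝ} (h : IsUnit M) : 0 < mnorm M := by
  have h2 : IsUnit (Matrix.toEuclideanCLM (𝕜 := ℝ) M) := h.map _
  have h3 : (Matrix.toEuclideanCLM (𝕜 := ℝ) M) ≠ 0 := h2.ne_zero
  simpa [mnorm] using norm_pos_iff.mpr h3

lemma col_le (M : Matrix (Fin 2) (Fin 2) ℝ) (j : Fin 2) :
    M 0 j ^ 2 + M 1 j ^ 2 ≤ mnorm M ^ 2 := by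
  set T := Matrix.toEuclideanCLM (𝕜 := ℝ) M
  have h := T.le_opNorm (EuclideanSpace.single j 1)
  rw [EuclideanSpace.norm_single] at h
  have hx : T (EuclideanSpace.single j 1) =
      (WithLp.equiv 2 (Fin 2 → ℝ)).symm (fun i => M i j) := by
    have : EuclideanSpace.single (𝕜 := ℝ) j (1:ℝ) =
        (WithLp.equiv 2 (Fin 2 → ℝ)).symm (Pi.single j 1) := rfl
    rw [this]; erw [Matrix.toEuclideanCLM_toLp]
    congr 1
    simp [Matrix.toLin'_apply, Matrix.mulVec_single]; rfl
  have hnorm : ‖T (EuclideanSpace.single j 1)‖ ^ 2 = M 0 j ^ 2 + M 1 j ^ 2 := by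
    rw [hx, EuclideanSpace.norm_eq]
    rw [Real.sq_sqrt (by positivity)]
    simp [Fin.sum_univ_two, sq_abs]
  calc M 0 j ^ 2 + M 1 j ^ 2 = ‖T (EuclideanSpace.single j 1)‖ ^ 2 := hnorm.symm
    _ ≤ (‖T‖ * ‖(1:ℝ)‖) ^ 2 := by
        apply pow_le_pow_left₀ (norm_nonneg _) h
    _ = mnorm M ^ 2 := by simp [mnorm, T]

lemma abs_det_le (M : Matrix (Fin 2) (Fin 2) ℝ) : |M.det| ≤ mnorm M ^ 2 := by
  have h0 := col_le M 0
  have h1 := col_le M 1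
  have hm : (0:ℝ) ≤ mnorm M ^ 2 := sq_nonneg _
  rw [Matrix.det_fin_two]
  have hsq : (M 0 0 * M 1 1 - M 0 1 * M 1 0) ^ 2 ≤ (mnorm M ^ 2) ^ 2 := by
    nlinarith [sq_nonneg (M 0 0 * M 0 1 + M 1 0 * M 1 1), sq_nonneg (M 0 0 ^2 + M 1 0 ^2 - mnorm M ^2)]
  calc |M 0 0 * M 1 1 - M 0 1 * M 1 0|
      = Real.sqrt ((M 0 0 * M 1 1 - M 0 1 * M 1 0) ^ 2) := (Real.sqrt_sq_eq_abs _).symm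
    _ ≤ Real.sqrt ((mnorm M ^ 2) ^ 2) := Real.sqrt_le_sqrt hsq
    _ = mnorm M ^ 2 := by rw [Real.sqrt_sq hm]

/-- Domination `|det(A_ii)| / ‖A_ii‖² ≤ C τ^{|ii|}` forces every σ-invariant ergodic
probability measure to have a simple Lyapunov spectrum: `χ₁(ν) < χ₂(ν)`. -/
theorem stmt_3 (N : ℕ) (A : Fin N → Matrix (Fin 2) (Fin 2) ℝ) (hinv : ∀ i, IsUnit (A i))
    (C τ : ℝ) (hC : 0 < C) (hτ0 : 0 < τ) (hτ1 : τ < 1)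
    (hdom : ∀ (n : ℕ) (ii : Fin n → Fin N),
      abs (Matrix.det ((List.ofFn fun k => A (ii k)).prod)) /
          (mnorm ((List.ofFn fun k => A (ii k)).prod)) ^ 2 ≤ C * τ ^ n)
    (ν : Measure (ℕ → Fin N)) [IsProbabilityMeasure ν]
    (herg : Ergodic (fun ii k => ii (k + 1)) ν)
    (χ₁ χ₂ : ℝ)
    (h1 : ∀ᵐ ii ∂ν, Tendsto (fun n : ℕ =>
        -(1 / (n : ℝ)) * Real.log (mnorm ((List.ofFn fun k : Fin n => A (ii k)).prod)))
        atTop (nhds χ₁))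
    (h2 : ∀ᵐ ii ∂ν, Tendsto (fun n : ℕ =>
        -(1 / (n : ℝ)) * Real.log ((mnorm ((List.ofFn fun k : Fin n => (A (ii k))⁻¹).prod))⁻¹))
        atTop (nhds χ₂)) :
    χ₁ < χ₂ := by
  obtain ⟨ii, hii1, hii2⟩ := (h1.and h2).exists
  set P : ℕ → Matrix (Fin 2) (Fin 2) ℝ := fun n => (List.ofFn fun k : Fin n => A (ii k)).prod
  set Q : ℕ → Matrix (Fin 2) (Fin 2) ℝ := fun n => (List.ofFn fun k : Fin n => (A (ii k))⁻¹).prod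
  have hPu : ∀ n, IsUnit (P n) := by
    intro n
    apply List.prod_isUnit
    intro m hm
    rw [List.mem_ofFn] at hm
    obtain ⟨k, rfl⟩ := hm
    exact hinv _
  have hQu : ∀ n, IsUnit (Q n) := by
    intro n
    apply List.prod_isUnit
    intro m hm
    rw [List.mem_ofFn] at hm
    obtain ⟨k, rfl⟩ := hm
    exact Matrix.isUnit_nonsing_inv_iff.mpr (hinv _)
  have hdetP : ∀ n, (P n).det ≠ 0 := fun n =>
    ((Matrix.isUnit_iff_isUnit_det _).mp (hPu n)).ne_zero
  have hdetQ : ∀ n, (Q n).det = ((P n).det)⁻¹ := by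
    intro n
    have e1 : (Q n).det = (List.ofFn fun k : Fin n => ((A (ii k))⁻¹).det).prod := by
      have h := map_list_prod (Matrix.detMonoidHom) (List.ofFn fun k : Fin n => (A (ii k))⁻¹)
      rw [List.map_ofFn] at h
      exact h
    have e2 : (P n).det = (List.ofFn fun k : Fin n => (A (ii k)).det).prod := by
      have h := map_list_prod (Matrix.detMonoidHom) (List.ofFn fun k : Fin n => A (ii k))
      rw [List.map_ofFn] at h
      exact h
    rw [e1, e2, List.prod_ofFn, List.prod_ofFn]
    rw [← Finset.prod_inv_distrib]
    apply Finset.prod_congr rfl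
    intro k _
    rw [Matrix.det_nonsing_inv, Ring.inverse_eq_inv']
  -- key pointwise inequality
  have key : ∀ n : ℕ, 1 ≤ n →
      (1 / (n : ℝ)) * (-(Real.log C) / 2) + (-(1/2) * Real.log τ) ≤
      (-(1 / (n : ℝ)) * Real.log ((mnorm (Q n))⁻¹)) - (-(1 / (n : ℝ)) * Real.log (mnorm (P n))) := by
    intro n hn
    have hx : 0 < mnorm (P n) := mnorm_pos (hPu n)
    have hy : 0 < mnorm (Q n) := mnorm_pos (hQu n)
    have hd : 0 < |(P n).det| := abs_pos.mpr (hdetP n)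
    have hCτ : 0 < C * τ ^ n := by positivity
    have hb1 : |(P n).det| ≤ C * τ ^ n * mnorm (P n) ^ 2 := by
      have := hdom n (fun k : Fin n => ii k)
      rw [div_le_iff₀ (by positivity)] at this
      linarith [this]
    have hb2 : |(P n).det|⁻¹ ≤ mnorm (Q n) ^ 2 := by
      have := abs_det_le (Q n)
      rwa [hdetQ n, abs_inv] at this
    -- take logs
    have l1 : Real.log |(P n).det| ≤ Real.log (C * τ ^ n) + 2 * Real.log (mnorm (P n)) := by
      have := Real.log_le_log hd hb1
      rwa [Real.log_mul hCτ.ne' (by positivity), Real.log_pow, Nat.cast_ofNat] at this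
    have l2 : -Real.log |(P n).det| ≤ 2 * Real.log (mnorm (Q n)) := by
      have := Real.log_le_log (by positivity) hb2
      rwa [Real.log_inv, Real.log_pow, Nat.cast_ofNat] at this
    have lsum : -(Real.log (C * τ ^ n)) / 2 ≤ Real.log (mnorm (P n)) + Real.log (mnorm (Q n)) := by
      linarith
    have hlogCτ : Real.log (C * τ ^ n) = Real.log C + (n : ℝ) * Real.log τ := by
      rw [Real.log_mul hC.ne' (by positivity), Real.log_pow]
    have hnpos : (0:ℝ) < (n : ℝ) := by exact_mod_cast hn
    rw [Real.log_inv]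
    have goal2 : (1 / (n : ℝ)) * (-(Real.log (C * τ ^ n)) / 2) ≤
        (1 / (n : ℝ)) * (Real.log (mnorm (P n)) + Real.log (mnorm (Q n))) := by
      apply mul_le_mul_of_nonneg_left lsum (by positivity)
    calc (1 / (n : ℝ)) * (-(Real.log C) / 2) + (-(1/2) * Real.log τ)
        = (1 / (n : ℝ)) * (-(Real.log (C * τ ^ n)) / 2) := by
          rw [hlogCτ]; field_simp; ring
      _ ≤ (1 / (n : ℝ)) * (Real.log (mnorm (P n)) + Real.log (mnorm (Q n))) := goal2
      _ = (-(1 / (n : ℝ)) * -(Real.log (mnorm (Q n)))) - (-(1 / (n : ℝ)) * Real.log (mnorm (P n))) := by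
          ring
  -- limits
  have hlim : Tendsto (fun n : ℕ => (1 / (n : ℝ)) * (-(Real.log C) / 2) + (-(1/2) * Real.log τ))
      atTop (nhds (0 * (-(Real.log C) / 2) + (-(1/2) * Real.log τ))) :=
    (tendsto_one_div_atTop_nhds_zero_nat.mul_const _).add_const _
  rw [zero_mul, zero_add] at hlim
  have hdiff : Tendsto (fun n : ℕ =>
      (-(1 / (n : ℝ)) * Real.log ((mnorm (Q n))⁻¹)) - (-(1 / (n : ℝ)) * Real.log (mnorm (P n))))
      atTop (nhds (χ₂ - χ₁)) := hii2.sub hii1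
  have hle : -(1/2) * Real.log τ ≤ χ₂ - χ₁ := by
    apply le_of_tendsto_of_tendsto hlim hdiff
    filter_upwards [eventually_ge_atTop 1] with n hn
    exact key n hn
  have hτneg : Real.log τ < 0 := Real.log_neg hτ0 hτ1
  linarith
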